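/- In the one-pass refinement sampling process (Algorithm 3), for every index 1 ≤ J ≤ LK with J = (l,k), let X^J denote the set of edges e_t = (u_t, v_t) such that u_t and v_t lie in the same part of D_{J−1} at the moment e_t arrives. Then there is a constant c (depending on d) such that with probability at least 1 − n^{−d}, |E ∖ X^J| ≤ c·K·2^l·n. -/

import Mathlib

namespace GraphSparsification

open scoped BigOperators

variable {V : Type*}

/-- An edge `e` crosses the cut `(S, Sᶜ)`. -/
def Crosses (S : Set V) (e : Sym2 V) : Prop :=
  ∃ u v, e = s(u, v) ∧ u ∈ S ∧ v ∉ S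

/-- The value (number of edges) of the cut determined by `S` in the edge set `E`. -/
noncomputable def cutValue (E : Set (Sym2 V)) (S : Set V) : ℕ :=
  {e | e ∈ E ∧ Crosses S e}.ncard

/-- The graph with vertex set `U` and edge set `F` is `k`-connected:
every cut has value at least `k`. -/
def IsKConnected (U : Set V) (F : Set (Sym2 V)) (k : ℕ) : Prop :=
  ∀ S : Set V, S ⊆ U → S.Nonempty → S ≠ U → k ≤ cutValue F S

/-- Edges of `E` with both endpoints in `U` (the vertex-induced subgraph). -/
def induced (E : Set (Sym2 V)) (U : Set V) : Set (Sym2 V) :=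
  {e | e ∈ E ∧ ∀ x ∈ e, x ∈ U}

/-- `U` is a `k`-strong component of the graph with edge set `E`:
a maximal `k`-connected vertex-induced subgraph. -/
def IsStrongComponent (E : Set (Sym2 V)) (k : ℕ) (U : Set V) : Prop :=
  U.Nonempty ∧ IsKConnected U (induced E U) k ∧
    ∀ U' : Set V, U ⊆ U' → IsKConnected U' (induced E U') k → U' = U

/-- Strong connectivity of an edge: the largest `k` such that some `k`-strong component
contains `e`. -/
noncomputable def strongConn (E : Set (Sym2 V)) (e : Sym2 V) : ℕ :=
  sSup {k | ∃ U : Set V, IsStrongComponent E k U ∧ e ∈ induced E U}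

/-- Connectivity via edges of `F`. -/
def connRel (F : Set (Sym2 V)) : V → V → Prop :=
  Relation.ReflTransGen (fun a b => a ≠ b ∧ s(a, b) ∈ F)

/-- Number of connected components of the graph on `V` with edge set `F`. -/
noncomputable def numComponents (F : Set (Sym2 V)) : ℕ :=
  Nat.card (Quot (fun a b : V => a ≠ b ∧ s(a, b) ∈ F))

/-- Weight of the cut determined by `S` in the weighted graph `(E', w)`. -/
noncomputable def cutWeight (E' : Set (Sym2 V)) (w : Sym2 V → ℝ) (S : Set V) : ℝ :=
  ∑ᶠ e ∈ {e | e ∈ E' ∧ Crosses S e}, w e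

/-- The weighted graph `(E', w)` is an `ε`-sparsification of `E`: every weighted cut is
within a `(1 ± ε)` factor of the corresponding cut of `E`. -/
def IsSparsification (E E' : Set (Sym2 V)) (w : Sym2 V → ℝ) (ε : ℝ) : Prop :=
  ∀ S : Set V, S.Nonempty → S ≠ Set.univ →
    (1 - ε) * (cutValue E S : ℝ) ≤ cutWeight E' w S ∧
      cutWeight E' w S ≤ (1 + ε) * (cutValue E S : ℝ)

/-- Probability weight of the outcome `σ` when each coin `a` comes up `true`
independently with probability `p a`. -/
noncomputable def bernWeight {α : Type*} [Fintype α] (p : α → ℝ) (σ : α → Bool) : ℝ :=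
  ∏ a, if σ a then p a else 1 - p a

/-- Probability of the event `A` under independent coins with head-probabilities `p`. -/
noncomputable def Pr {α : Type*} [Fintype α] [DecidableEq α] (p : α → ℝ)
    (A : Set (α → Bool)) : ℝ :=
  ∑ σ : α → Bool, A.indicator (bernWeight p) σ

/-- Expectation of `f` under independent coins with head-probabilities `p`. -/
noncomputable def Exp {α : Type*} [Fintype α] [DecidableEq α] (p : α → ℝ)
    (f : (α → Bool) → ℝ) : ℝ :=
  ∑ σ : α → Bool, bernWeight p σ * f σ

/-- Same-part relation of the partition `S_{l,k}` of refinement sampling after `k` rounds of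
refinement at level `l` (the `Fin L` index `l` represents level `l+1`, and the `Fin K`
index `k` represents round `k+1`): `S_{l,0} = {V}`, and `S_{l,k+1}` splits each part of
`S_{l,k}` into the connected components spanned by edges whose `(l,k+1)`-coin is `true`
and whose endpoints lie in one part of `S_{l,k}`. -/
def sameS (E : Set (Sym2 V)) {L K : ℕ} (σ : Fin L × Fin K × Sym2 V → Bool) (l : Fin L) :
    ℕ → V → V → Prop
  | 0 => fun _ _ => True
  | k + 1 => fun u v =>
      Relation.ReflTransGen (fun a b => a ≠ b ∧ s(a, b) ∈ E ∧ sameS E σ l k a b ∧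
        ∃ hk : k < K, σ (l, ⟨k, hk⟩, s(a, b)) = true) u v

/-- `L(e)`: the minimum level `l ∈ {1, …, L}` such that the endpoints of `e` lie in
different parts of `S_{l,K}`. -/
noncomputable def levelOf (E : Set (Sym2 V)) {L K : ℕ} (σ : Fin L × Fin K × Sym2 V → Bool)
    (e : Sym2 V) : ℕ :=
  sInf {m | ∃ l : Fin L, m = (l : ℕ) + 1 ∧ ∀ u v : V, e = s(u, v) → ¬ sameS E σ l K u v}

/-- Head-probabilities of the refinement-sampling coins: the coin of level `l` (represented
by the `Fin L` index `l - 1`) comes up `true` with probability `2^{-l}`. -/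
noncomputable def pCoins {L K : ℕ} : Fin L × Fin K × Sym2 V → ℝ :=
  fun x => (1 / 2 : ℝ) ^ ((x.1 : ℕ) + 1)

/-- One step of Algorithm 3: process the arriving edge `e` with coins `coin` (indexed by
`J ∈ {1, …, LK}`), updating the partitions `D`, where `D 0` is the trivial partition `{V}`:
for `J = 1, 2, …` in order, the parts of `D J` containing the endpoints of `e` are merged
if the `J`-th coin of `e` is `true` and the endpoints of `e` lie in one part of the
(already updated) partition number `J - 1`. -/
def processEdge (e : Sym2 V) (coin : ℕ → Bool) (D : ℕ → V → V → Prop) : ℕ → V → V → Prop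
  | 0 => fun _ _ => True
  | J + 1 => fun u v =>
      Relation.EqvGen (fun a b => D (J + 1) a b ∨
        (coin (J + 1) = true ∧ s(a, b) = e ∧ processEdge e coin D J a b)) u v

/-- Initial state of the partitions of Algorithm 3: `D 0 = {V}` is the trivial partition and
all other partitions consist of singletons. -/
def initD : ℕ → V → V → Prop
  | 0 => fun _ _ => True
  | _ + 1 => Eq

/-- State of the partitions of Algorithm 3 after the first `t` edges of the stream `es`
have been processed. -/
def DStream (coin : Sym2 V → ℕ → Bool) (es : ℕ → Sym2 V) : ℕ → ℕ → V → V → Prop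
  | 0 => initD
  | t + 1 => processEdge (es t) (coin (es t)) (DStream coin es t)

/-- The endpoints of the edge `es t` lie in the same part of partition number `J` at the
moment `es t` arrives (i.e. while `es t` is being processed, partitions `0, …, J` having
already been updated). -/
def connectedAtArrival (coin : Sym2 V → ℕ → Bool) (es : ℕ → Sym2 V) (t J : ℕ) : Prop :=
  ∀ u v : V, es t = s(u, v) → processEdge (es t) (coin (es t)) (DStream coin es t) J u v

/-- The coins of Algorithm 3, reindexed by `J = K(l-1) + k`. -/
def coinOf {L K : ℕ} (σ : Fin L × Fin K × Sym2 V → Bool) : Sym2 V → ℕ → Bool :=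
  fun e J =>
    if h : 1 ≤ J ∧ (J - 1) / K < L ∧ (J - 1) % K < K then
      σ (⟨(J - 1) / K, h.2.1⟩, ⟨(J - 1) % K, h.2.2⟩, e)
    else false

/-- `L'(e_t)`: the minimum level `l ∈ {1, …, L}` such that the endpoints of the edge `es t`
lie in different parts of `D_{(l,K)}` (i.e. partition number `lK`) when `es t` is
processed. -/
noncomputable def streamLevel (coin : Sym2 V → ℕ → Bool) (es : ℕ → Sym2 V) (K L t : ℕ) : ℕ :=
  sInf {l | 1 ≤ l ∧ l ≤ L ∧ ∀ u v : V, es t = s(u, v) → ¬ DStream coin es (t + 1) (l * K) u v}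


set_option linter.unusedSectionVars false
set_option linter.unusedVariables false
set_option maxHeartbeats 1000000


section Bern

variable {α : Type*} [Fintype α] [DecidableEq α] (p : α → ℝ)

lemma bernWeight_nonneg (hp : ∀ a, 0 ≤ p a ∧ p a ≤ 1) (σ : α → Bool) :
    0 ≤ bernWeight p σ := by
  refine Finset.prod_nonneg fun a _ => ?_
  rcases hp a with ⟨h0, h1⟩
  split <;> linarith

lemma sum_bernWeight : ∑ σ : α → Bool, bernWeight p σ = 1 := by
  have h := Finset.prod_univ_sum (κ := fun _ : α => Bool) (fun _ => Finset.univ)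
    (fun a b => if b then p a else 1 - p a)
  rw [Fintype.piFinset_univ] at h
  have h2 : ∀ a : α, (∑ j : Bool, if j then p a else 1 - p a) = 1 := by
    intro a; rw [Fintype.sum_bool]; ring_nf; simp
  calc ∑ σ : α → Bool, bernWeight p σ
      = ∑ x : α → Bool, ∏ a, if x a then p a else 1 - p a := rfl
    _ = ∏ a : α, ∑ j : Bool, if j then p a else 1 - p a := h.symm
    _ = ∏ a : α, (1:ℝ) := by exact Finset.prod_congr rfl fun a _ => h2 a
    _ = 1 := Finset.prod_const_one

lemma Exp_mono {f g : (α → Bool) → ℝ} (hp : ∀ a, 0 ≤ p a ∧ p a ≤ 1)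
    (h : ∀ σ, f σ ≤ g σ) : Exp p f ≤ Exp p g :=
  Finset.sum_le_sum fun σ _ =>
    mul_le_mul_of_nonneg_left (h σ) (bernWeight_nonneg p hp σ)

lemma Exp_const (r : ℝ) : Exp p (fun _ => r) = r := by
  rw [Exp, ← Finset.sum_mul, sum_bernWeight, one_mul]

lemma Exp_smul (r : ℝ) (f : (α → Bool) → ℝ) :
    Exp p (fun σ => r * f σ) = r * Exp p f := by
  rw [Exp, Exp, Finset.mul_sum]
  exact Finset.sum_congr rfl fun σ _ => by ring

lemma Pr_le_exp (hp : ∀ a, 0 ≤ p a ∧ p a ≤ 1) {A : Set (α → Bool)}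
    {q : (α → Bool) → ℝ} (hq0 : ∀ σ, 0 ≤ q σ) (hq1 : ∀ σ ∈ A, 1 ≤ q σ) :
    Pr p A ≤ Exp p q := by
  refine Finset.sum_le_sum fun σ _ => ?_
  by_cases h : σ ∈ A
  · rw [Set.indicator_of_mem h]
    calc bernWeight p σ = bernWeight p σ * 1 := (mul_one _).symm
      _ ≤ bernWeight p σ * q σ :=
        mul_le_mul_of_nonneg_left (hq1 σ h) (bernWeight_nonneg p hp σ)
  · rw [Set.indicator_of_notMem h]
    exact mul_nonneg (bernWeight_nonneg p hp σ) (hq0 σ)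

lemma Pr_add_compl (hp : ∀ a, 0 ≤ p a ∧ p a ≤ 1) (A : Set (α → Bool)) :
    Pr p A + Pr p Aᶜ = 1 := by
  rw [Pr, Pr, ← Finset.sum_add_distrib, ← sum_bernWeight p]
  refine Finset.sum_congr rfl fun σ _ => ?_
  by_cases h : σ ∈ A
  · rw [Set.indicator_of_mem h, Set.indicator_of_notMem (by simpa using h), add_zero]
  · rw [Set.indicator_of_notMem h, Set.indicator_of_mem (by simpa using h), zero_add]

lemma Pr_le_sum {ι : Type*} (hp : ∀ a, 0 ≤ p a ∧ p a ≤ 1) {A : Set (α → Bool)}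
    {s : Finset ι} {B : ι → Set (α → Bool)}
    (h : ∀ σ ∈ A, ∃ i ∈ s, σ ∈ B i) : Pr p A ≤ ∑ i ∈ s, Pr p (B i) := by
  have key : ∀ σ : α → Bool,
      A.indicator (bernWeight p) σ ≤ ∑ i ∈ s, (B i).indicator (bernWeight p) σ := by
    intro σ
    by_cases hσ : σ ∈ A
    · obtain ⟨i, hi, hBi⟩ := h σ hσ
      rw [Set.indicator_of_mem hσ]
      have : (B i).indicator (bernWeight p) σ = bernWeight p σ := Set.indicator_of_mem hBi _
      calc bernWeight p σ = (B i).indicator (bernWeight p) σ := this.symm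
        _ ≤ ∑ i ∈ s, (B i).indicator (bernWeight p) σ :=
          Finset.single_le_sum (fun j _ => Set.indicator_nonneg
            (fun τ _ => bernWeight_nonneg p hp τ) σ) hi
    · rw [Set.indicator_of_notMem hσ]
      exact Finset.sum_nonneg fun j _ => Set.indicator_nonneg
        (fun τ _ => bernWeight_nonneg p hp τ) σ
  calc Pr p A ≤ ∑ σ : α → Bool, ∑ i ∈ s, (B i).indicator (bernWeight p) σ :=
        Finset.sum_le_sum fun σ _ => key σ
    _ = ∑ i ∈ s, Pr p (B i) := Finset.sum_comm

lemma Pr_nonneg (hp : ∀ a, 0 ≤ p a ∧ p a ≤ 1) (A : Set (α → Bool)) :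
    0 ≤ Pr p A := by
  refine Finset.sum_nonneg fun σ _ => Set.indicator_nonneg (fun τ _ => bernWeight_nonneg p hp τ) σ

end Bern



section Bern

variable {α : Type*} [Fintype α] [DecidableEq α] (p : α → ℝ)

lemma update_invol (a : α) :
    Function.Involutive (fun σ : α → Bool => Function.update σ a (!σ a)) := by
  intro σ
  funext x
  by_cases hx : x = a
  · subst hx; simp
  · simp [Function.update_of_ne hx]

lemma sum_eq_pair (a : α) (F : (α → Bool) → ℝ) :
    ∑ σ : α → Bool, F σ
      = ∑ σ : α → Bool, (if σ a then F σ + F (Function.update σ a false) else 0) := by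
  have hsplit : ∀ σ : α → Bool,
      F σ = (if σ a then F σ else 0) + (if σ a then 0 else F σ) := by
    intro σ; by_cases h : σ a <;> simp [h]
  have h2 : ∑ σ : α → Bool, (if σ a then 0 else F σ)
      = ∑ σ : α → Bool, (if σ a then F (Function.update σ a false) else 0) := by
    rw [← Equiv.sum_comp ((update_invol (α := α) a).toPerm)
      (fun σ => if σ a then 0 else F σ)]
    simp only [Function.Involutive.coe_toPerm]
    refine Finset.sum_congr rfl fun σ _ => ?_
    by_cases h : σ a
    · rw [if_pos h]
      have ha : Function.update σ a (!σ a) a = false := by rw [h]; simp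
      have hb : Function.update σ a (!σ a) = Function.update σ a false := by
        rw [h]; norm_num
      simp [h]
    · have hb : σ a = false := by simpa using h
      have ha : Function.update σ a (!σ a) a = true := by rw [hb]; simp
      simp [h]
  calc ∑ σ : α → Bool, F σ
      = ∑ σ : α → Bool, ((if σ a then F σ else 0) + (if σ a then 0 else F σ)) :=
        Finset.sum_congr rfl fun σ _ => hsplit σ
    _ = (∑ σ : α → Bool, (if σ a then F σ else 0))
        + ∑ σ : α → Bool, (if σ a then 0 else F σ) := Finset.sum_add_distrib
    _ = ∑ σ : α → Bool, (if σ a then F σ + F (Function.update σ a false) else 0) := by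
        rw [h2, ← Finset.sum_add_distrib]
        refine Finset.sum_congr rfl fun σ _ => ?_
        by_cases h : σ a <;> simp [h]

lemma bernWeight_update (a : α) (σ : α → Bool) (b : Bool) :
    bernWeight p (Function.update σ a b)
      = (if b then p a else 1 - p a)
        * ∏ x ∈ Finset.univ.erase a, (if σ x then p x else 1 - p x) := by
  rw [bernWeight, ← Finset.mul_prod_erase Finset.univ _ (Finset.mem_univ a)]
  congr 1
  · simp
  · refine Finset.prod_congr rfl fun x hx => ?_
    rw [Function.update_of_ne (Finset.ne_of_mem_erase hx)]

lemma exp_update (a : α) (G : (α → Bool) → Bool → ℝ)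
    (hG : ∀ σ b b', G (Function.update σ a b) b' = G σ b') :
    Exp p (fun σ => G σ (σ a))
      = Exp p (fun σ => p a * G σ true + (1 - p a) * G σ false) := by
  rw [Exp, Exp, sum_eq_pair a (F := fun σ => bernWeight p σ * G σ (σ a)),
    sum_eq_pair a (F := fun σ => bernWeight p σ * (p a * G σ true + (1 - p a) * G σ false))]
  refine Finset.sum_congr rfl fun σ _ => ?_
  by_cases h : σ a
  · rw [if_pos h, if_pos h]
    have hσ : Function.update σ a true = σ := by
      conv_rhs => rw [← Function.update_eq_self a σ]
      rw [h]
    have hwσ : bernWeight p σ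
        = p a * ∏ x ∈ Finset.univ.erase a, (if σ x then p x else 1 - p x) := by
      rw [← hσ, bernWeight_update]
      have : Function.update σ a true = σ := hσ
      simp [this]
    have hwf : bernWeight p (Function.update σ a false)
        = (1 - p a) * ∏ x ∈ Finset.univ.erase a, (if σ x then p x else 1 - p x) := by
      rw [bernWeight_update]; simp
    have hupd : Function.update σ a false a = false := by simp
    have hGf : ∀ b', G (Function.update σ a false) b' = G σ b' := fun b' => hG σ false b'
    rw [hupd, hwσ, hwf, hGf, hGf, h]
    ring
  · simp [h]

end Bern


variable {V : Type*}

/-! ### Basic structural lemmas -/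

lemma processEdge_equivalence (e : Sym2 V) (c : ℕ → Bool) (D : ℕ → V → V → Prop) :
    ∀ J, Equivalence (processEdge e c D J)
  | 0 => ⟨fun _ => trivial, fun _ => trivial, fun _ _ => trivial⟩
  | J + 1 => Relation.EqvGen.is_equivalence _

lemma initD_equivalence : ∀ J, Equivalence (initD (V := V) J)
  | 0 => ⟨fun _ => trivial, fun _ => trivial, fun _ _ => trivial⟩
  | _ + 1 => eq_equivalence

lemma DStream_equivalence (coin : Sym2 V → ℕ → Bool) (es : ℕ → Sym2 V) :
    ∀ t J, Equivalence (DStream coin es t J)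
  | 0 => initD_equivalence
  | t + 1 => processEdge_equivalence _ _ _

lemma le_processEdge (e : Sym2 V) (c : ℕ → Bool) (D : ℕ → V → V → Prop) (J : ℕ)
    {u v : V} (h : D J u v) : processEdge e c D J u v := by
  cases J with
  | zero => trivial
  | succ J => exact Relation.EqvGen.rel _ _ (Or.inl h)

lemma processEdge_merge (e : Sym2 V) (c : ℕ → Bool) (D : ℕ → V → V → Prop) {J : ℕ}
    (hJ : 1 ≤ J) {u v : V} (hc : c J = true) (hs : s(u, v) = e)
    (h : processEdge e c D (J - 1) u v) : processEdge e c D J u v := by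
  obtain ⟨J', rfl⟩ : ∃ J', J = J' + 1 := ⟨J - 1, (Nat.succ_pred_eq_of_pos hJ).symm⟩
  exact Relation.EqvGen.rel _ _ (Or.inr ⟨hc, hs, h⟩)

/-! ### Congruence lemmas -/

lemma processEdge_congr (e : Sym2 V) {c c' : ℕ → Bool} {D D' : ℕ → V → V → Prop} :
    ∀ J, (∀ i, 1 ≤ i → i ≤ J → c i = c' i) →
      (∀ i ≤ J, ∀ u v, D i u v ↔ D' i u v) →
      ∀ u v, processEdge e c D J u v ↔ processEdge e c' D' J u v := by
  intro J
  induction J with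
  | zero => intro _ _ u v; exact Iff.rfl
  | succ J ih =>
    intro hc hD u v
    have hbase : ∀ a b,
        (D (J + 1) a b ∨ (c (J + 1) = true ∧ s(a, b) = e ∧ processEdge e c D J a b)) ↔
        (D' (J + 1) a b ∨ (c' (J + 1) = true ∧ s(a, b) = e ∧ processEdge e c' D' J a b)) := by
      intro a b
      rw [hD (J + 1) le_rfl, hc (J + 1) (Nat.succ_le_succ (Nat.zero_le _)) le_rfl,
        ih (fun i h1 h2 => hc i h1 (Nat.le_succ_of_le h2))
          (fun i h2 => hD i (Nat.le_succ_of_le h2)) a b]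
    constructor
    · exact fun h' => Relation.EqvGen.mono (fun a b h => (hbase a b).mp h) u v h'
    · exact fun h' => Relation.EqvGen.mono (fun a b h => (hbase a b).mpr h) u v h'

lemma DStream_congr {coin coin' : Sym2 V → ℕ → Bool} (es : ℕ → Sym2 V) :
    ∀ t, (∀ s < t, ∀ i, coin (es s) i = coin' (es s) i) →
      ∀ J u v, DStream coin es t J u v ↔ DStream coin' es t J u v := by
  intro t
  induction t with
  | zero => intro _ _ _ _; exact Iff.rfl
  | succ t ih =>
    intro h J u v
    refine processEdge_congr (es t) J (fun i _ _ => h t (Nat.lt_succ_self t) i) ?_ u v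
    intro i _ u' v'
    exact ih (fun s hs i' => h s (Nat.lt_succ_of_lt hs) i') i u' v'


/-! ### Trials -/

def sameOld (coin : Sym2 V → ℕ → Bool) (es : ℕ → Sym2 V) (t J : ℕ) : Prop :=
  ∀ u v : V, es t = s(u, v) → DStream coin es t J u v

def trial (coin : Sym2 V → ℕ → Bool) (es : ℕ → Sym2 V) (t J : ℕ) : Prop :=
  connectedAtArrival coin es t (J - 1) ∧ ¬ sameOld coin es t J

lemma connectedAtArrival_zero (coin : Sym2 V → ℕ → Bool) (es : ℕ → Sym2 V) (t : ℕ) :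
    connectedAtArrival coin es t 0 := fun _ _ _ => trivial

lemma connectedAtArrival_of_sameOld {coin : Sym2 V → ℕ → Bool} {es : ℕ → Sym2 V} {t J : ℕ}
    (h : sameOld coin es t J) : connectedAtArrival coin es t J :=
  fun u v huv => le_processEdge _ _ _ _ (h u v huv)

lemma connectedAtArrival_merge {coin : Sym2 V → ℕ → Bool} {es : ℕ → Sym2 V} {t J : ℕ}
    (hJ : 1 ≤ J) (hc : coin (es t) J = true)
    (h : connectedAtArrival coin es t (J - 1)) : connectedAtArrival coin es t J :=
  fun u v huv => processEdge_merge _ _ _ hJ hc huv.symm (h u v huv)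

/-- Every "weak" edge is a tails-trial at some index `i ≤ j`. -/
lemma exists_trial_of_not_connected {coin : Sym2 V → ℕ → Bool} {es : ℕ → Sym2 V} {t : ℕ} :
    ∀ j, ¬ connectedAtArrival coin es t j →
      ∃ i, 1 ≤ i ∧ i ≤ j ∧ trial coin es t i ∧ coin (es t) i = false := by
  intro j
  induction j with
  | zero => intro h; exact absurd (connectedAtArrival_zero coin es t) h
  | succ j ih =>
    intro h
    by_cases hj : connectedAtArrival coin es t j
    · refine ⟨j + 1, Nat.succ_le_succ (Nat.zero_le _), le_rfl, ⟨?_, ?_⟩, ?_⟩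
      · simpa using hj
      · intro hso
        exact h (connectedAtArrival_of_sameOld hso)
      · by_contra hc
        rw [Bool.not_eq_false] at hc
        exact h (connectedAtArrival_merge (Nat.succ_le_succ (Nat.zero_le _)) hc
          (by simpa using hj))
    · obtain ⟨i, h1, h2, h3, h4⟩ := ih hj
      exact ⟨i, h1, Nat.le_succ_of_le h2, h3, h4⟩


/-! ### Coins and coordinates -/

section Coins

variable [DecidableEq V] {L K : ℕ}

lemma coinOf_eq (σ : Fin L × Fin K × Sym2 V → Bool) (lf : Fin L) (kf : Fin K) (e : Sym2 V) :
    coinOf σ e (K * (lf : ℕ) + (kf : ℕ) + 1) = σ (lf, kf, e) := by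
  have hK : 0 < K := kf.pos
  have hd : (K * (lf : ℕ) + (kf : ℕ) + 1 - 1) / K = lf := by
    simp [Nat.mul_add_div hK, Nat.div_eq_of_lt kf.isLt]
  have hm : (K * (lf : ℕ) + (kf : ℕ) + 1 - 1) % K = kf := by
    simp [Nat.mul_add_mod, Nat.mod_eq_of_lt kf.isLt]
  rw [coinOf]
  rw [dif_pos]
  · congr 1 <;> try rfl
    · exact Prod.ext (Fin.ext hd) (Prod.ext (Fin.ext hm) rfl)
  · refine ⟨Nat.succ_le_succ (Nat.zero_le _), ?_, ?_⟩
    · rw [hd]; exact lf.isLt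
    · rw [hm]; exact kf.isLt

lemma coinOf_update_ne (σ : Fin L × Fin K × Sym2 V → Bool) (lf : Fin L) (kf : Fin K)
    (e : Sym2 V) (b : Bool) (f : Sym2 V) (i : ℕ)
    (h : f ≠ e ∨ i ≠ K * (lf : ℕ) + (kf : ℕ) + 1) :
    coinOf (Function.update σ (lf, kf, e) b) f i = coinOf σ f i := by
  rw [coinOf, coinOf]
  split
  · next hc =>
    rw [Function.update_of_ne]
    intro heq
    have h1 : (i - 1) / K = (lf : ℕ) := congrArg Fin.val (congrArg Prod.fst heq)
    have h2 : (i - 1) % K = (kf : ℕ) :=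
      congrArg Fin.val (congrArg Prod.fst (congrArg Prod.snd heq))
    have h3 : f = e := congrArg Prod.snd (congrArg Prod.snd heq)
    have h4 : i - 1 = K * (lf : ℕ) + (kf : ℕ) := by
      conv_lhs => rw [← Nat.div_add_mod (i - 1) K]
      rw [h1, h2]
    have h5 : i = K * (lf : ℕ) + (kf : ℕ) + 1 := by omega
    rcases h with h | h
    · exact h h3
    · exact h h5
  · rfl

end Coins


/-! ### Counting merges -/

section QuotCard

lemma quot_card_le {A : Type*} [Finite A] {r r' : A → A → Prop}
    (h : ∀ a b, r a b → r' a b) : Nat.card (Quot r') ≤ Nat.card (Quot r) := by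
  refine Nat.card_le_card_of_surjective (Quot.map id h) ?_
  intro x
  induction x using Quot.ind with
  | _ a => exact ⟨Quot.mk r a, rfl⟩

lemma quot_card_lt {A : Type*} [Finite A] {r r' : A → A → Prop}
    (h : ∀ a b, r a b → r' a b) (her : Equivalence r) {u v : A}
    (huv : ¬ r u v) (huv' : r' u v) : Nat.card (Quot r') < Nat.card (Quot r) := by
  have hsurj : Function.Surjective (Quot.map id h) := by
    intro x
    induction x using Quot.ind with
    | _ a => exact ⟨Quot.mk r a, rfl⟩
  have hle : Nat.card (Quot r') ≤ Nat.card (Quot r) := quot_card_le h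
  rcases lt_or_eq_of_le hle with hlt | heq
  · exact hlt
  · exfalso
    have hbij : Function.Bijective (Quot.map id h) :=
      (Nat.bijective_iff_surjective_and_card _).mpr ⟨hsurj, heq.symm⟩
    have h1 : Quot.map id h (Quot.mk r u) = Quot.map id h (Quot.mk r v) := by
      show Quot.mk r' u = Quot.mk r' v
      exact Quot.sound huv'
    have h2 : Quot.mk r u = Quot.mk r v := hbij.injective h1
    exact huv (her.eqvGen_iff.mp (Quot.eqvGen_exact h2))

lemma card_quot_eq (A : Type*) : Nat.card (Quot (@Eq A)) = Nat.card A := by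
  refine Nat.card_congr (Equiv.ofBijective (Quot.lift id fun a b h => h) ⟨?_, ?_⟩)
  · intro x y
    induction x using Quot.ind with
    | _ a =>
      induction y using Quot.ind with
      | _ b => intro hab; exact congrArg (Quot.mk Eq) hab
  · intro a
    exact ⟨Quot.mk Eq a, rfl⟩

lemma count_drops (g : ℕ → ℕ) (hmono : ∀ t, g (t + 1) ≤ g t) :
    ∀ m : ℕ, ((Finset.range m).filter (fun t => g (t + 1) < g t)).card + g m ≤ g 0 := by
  intro m
  induction m with
  | zero => simp
  | succ m ih =>
    classical
    rw [Finset.range_add_one, Finset.filter_insert]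
    by_cases h : g (m + 1) < g m
    · rw [if_pos h, Finset.card_insert_of_notMem (by simp)]
      omega
    · rw [if_neg h]
      have := hmono m
      omega

end QuotCard

section Heads

variable [DecidableEq V] {L K : ℕ}

open Classical in
/-- The number of tails-trials at index `J''` among the first `q` edges. -/
noncomputable def trialTails (es : ℕ → Sym2 V) (J'' q : ℕ)
    (σ : Fin L × Fin K × Sym2 V → Bool) : ℕ :=
  ((Finset.range q).filter fun t =>
    trial (coinOf σ) es t J'' ∧ coinOf σ (es t) J'' = false).card

open Classical in
/-- The number of heads-trials at index `J''` among the first `q` edges. -/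
noncomputable def trialHeads (es : ℕ → Sym2 V) (J'' q : ℕ)
    (σ : Fin L × Fin K × Sym2 V → Bool) : ℕ :=
  ((Finset.range q).filter fun t =>
    trial (coinOf σ) es t J'' ∧ coinOf σ (es t) J'' = true).card

open Classical in
lemma trialHeads_le [Finite V] (es : ℕ → Sym2 V) {J'' : ℕ} (hJ : 1 ≤ J'') (q : ℕ)
    (σ : Fin L × Fin K × Sym2 V → Bool) :
    trialHeads es J'' q σ ≤ Nat.card V := by
  set coin := coinOf (V := V) σ with hcoin
  set g : ℕ → ℕ := fun t => Nat.card (Quot (DStream coin es t J'')) with hg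
  have hmono : ∀ t, g (t + 1) ≤ g t := by
    intro t
    exact quot_card_le fun u v h => le_processEdge _ _ _ _ h
  have hsub : ((Finset.range q).filter fun t =>
      trial coin es t J'' ∧ coin (es t) J'' = true) ⊆
      (Finset.range q).filter (fun t => g (t + 1) < g t) := by
    intro t ht
    rw [Finset.mem_filter] at ht ⊢
    obtain ⟨htq, ⟨hconn, hnso⟩, hc⟩ := ht
    refine ⟨htq, ?_⟩
    unfold sameOld at hnso
    push_neg at hnso
    obtain ⟨u, v, huv, hD⟩ := hnso
    have hnew : DStream coin es (t + 1) J'' u v :=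
      processEdge_merge _ _ _ hJ hc huv.symm (hconn u v huv)
    exact quot_card_lt (fun a b h => le_processEdge _ _ _ _ h)
      (DStream_equivalence coin es t J'') hD hnew
  have h1 : trialHeads es J'' q σ ≤
      ((Finset.range q).filter (fun t => g (t + 1) < g t)).card := by
    rw [trialHeads]
    exact Finset.card_le_card hsub
  have h2 := count_drops g hmono q
  have h3 : g 0 = Nat.card V := by
    obtain ⟨J', rfl⟩ : ∃ J', J'' = J' + 1 := ⟨J'' - 1, (Nat.succ_pred_eq_of_pos hJ).symm⟩
    show Nat.card (Quot (initD (J' + 1))) = Nat.card V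
    rw [show initD (V := V) (J' + 1) = Eq from rfl, card_quot_eq]
  omega

end Heads


/-! ### The exponential moment of trial counts -/

section Crux

variable {V : Type*} [Fintype V] [DecidableEq V] {L K : ℕ}

open Classical in
lemma exp_trial (es : ℕ → Sym2 V) (m : ℕ)
    (hinj : ∀ t < m, ∀ t' < m, es t = es t' → t = t')
    (lf : Fin L) (kf : Fin K) :
    ∀ q, q ≤ m →
      Exp (pCoins (V := V) (L := L) (K := K))
        (fun σ => (1 + (1/2:ℝ)^((lf:ℕ)+1)/2) ^ trialTails es (K*(lf:ℕ)+(kf:ℕ)+1) q σ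
          * ((1 + (1/2:ℝ)^((lf:ℕ)+1))/2) ^ trialHeads es (K*(lf:ℕ)+(kf:ℕ)+1) q σ) = 1 := by
  set p : ℝ := (1/2:ℝ)^((lf:ℕ)+1) with hp
  set x : ℝ := 1 + p/2 with hx
  set y : ℝ := (1+p)/2 with hy
  set J'' : ℕ := K*(lf:ℕ)+(kf:ℕ)+1 with hJ''
  intro q
  induction q with
  | zero =>
    intro _
    have h0 : ∀ σ : Fin L × Fin K × Sym2 V → Bool,
        x ^ trialTails es J'' 0 σ * y ^ trialHeads es J'' 0 σ = 1 := by
      intro σ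
      rw [trialTails, trialHeads]
      simp
    calc Exp pCoins (fun σ => x ^ trialTails es J'' 0 σ * y ^ trialHeads es J'' 0 σ)
        = Exp pCoins (fun _ => (1:ℝ)) := by
          exact congrArg _ (funext h0)
      _ = 1 := Exp_const _ _
  | succ q ih =>
    intro hq1
    have hqm : q < m := hq1
    have ihq := ih (le_of_lt hqm)
    set a : Fin L × Fin K × Sym2 V := (lf, kf, es q) with ha
    have hedge : ∀ s, s < q → es s ≠ es q := by
      intro s hs heq
      exact absurd (hinj s (lt_trans hs hqm) q hqm heq) (Nat.ne_of_lt hs)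
    -- insensitivity of the process to the coin `a`
    have hDS : ∀ (σ : Fin L × Fin K × Sym2 V → Bool) (b : Bool), ∀ s ≤ q,
        ∀ Jx (u' v' : V), DStream (coinOf (Function.update σ a b)) es s Jx u' v'
          ↔ DStream (coinOf σ) es s Jx u' v' := by
      intro σ b s hs Jx u' v'
      refine DStream_congr es s ?_ Jx u' v'
      intro r hr i
      exact coinOf_update_ne σ lf kf (es q) b (es r) i
        (Or.inl (hedge r (lt_of_lt_of_le hr hs)))
    have htrial : ∀ (σ : Fin L × Fin K × Sym2 V → Bool) (b : Bool), ∀ t ≤ q,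
        trial (coinOf (Function.update σ a b)) es t J''
          ↔ trial (coinOf σ) es t J'' := by
      intro σ b t ht
      have hconn : connectedAtArrival (coinOf (Function.update σ a b)) es t (J'' - 1)
          ↔ connectedAtArrival (coinOf σ) es t (J'' - 1) := by
        refine forall_congr' fun u => forall_congr' fun v => imp_congr_right fun huv => ?_
        refine processEdge_congr (es t) (J'' - 1) ?_ ?_ u v
        · intro i hi1 hi2
          refine coinOf_update_ne σ lf kf (es q) b (es t) i (Or.inr ?_)
          omega
        · intro i hi u' v'
          exact hDS σ b t ht i u' v'
      have hso : sameOld (coinOf (Function.update σ a b)) es t J''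
          ↔ sameOld (coinOf σ) es t J'' := by
        refine forall_congr' fun u => forall_congr' fun v => imp_congr_right fun huv => ?_
        exact hDS σ b t ht J'' u v
      rw [trial, trial, hconn, hso]
    have hcoineq : ∀ (σ : Fin L × Fin K × Sym2 V → Bool),
        coinOf σ (es q) J'' = σ a := fun σ => coinOf_eq σ lf kf (es q)
    have hTails : ∀ (σ : Fin L × Fin K × Sym2 V → Bool) (b : Bool),
        trialTails es J'' q (Function.update σ a b) = trialTails es J'' q σ := by
      intro σ b
      rw [trialTails, trialTails]
      congr 1
      refine Finset.filter_congr fun t ht => ?_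
      rw [Finset.mem_range] at ht
      have h1 := htrial σ b t (le_of_lt ht)
      have h2 : coinOf (Function.update σ a b) (es t) J'' = coinOf σ (es t) J'' :=
        coinOf_update_ne σ lf kf (es q) b (es t) J'' (Or.inl (hedge t ht))
      rw [h1, h2]
    have hHeads : ∀ (σ : Fin L × Fin K × Sym2 V → Bool) (b : Bool),
        trialHeads es J'' q (Function.update σ a b) = trialHeads es J'' q σ := by
      intro σ b
      rw [trialHeads, trialHeads]
      congr 1
      refine Finset.filter_congr fun t ht => ?_
      rw [Finset.mem_range] at ht
      have h1 := htrial σ b t (le_of_lt ht)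
      have h2 : coinOf (Function.update σ a b) (es t) J'' = coinOf σ (es t) J'' :=
        coinOf_update_ne σ lf kf (es q) b (es t) J'' (Or.inl (hedge t ht))
      rw [h1, h2]
    -- the one-step decomposition
    have hsuccT : ∀ (σ : Fin L × Fin K × Sym2 V → Bool),
        trialTails es J'' (q+1) σ = trialTails es J'' q σ +
          (if trial (coinOf σ) es q J'' ∧ coinOf σ (es q) J'' = false then 1 else 0) := by
      intro σ
      rw [trialTails, trialTails, Finset.range_add_one, Finset.filter_insert]
      split
      · rw [Finset.card_insert_of_notMem (by simp)]
      · rw [add_zero]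
    have hsuccH : ∀ (σ : Fin L × Fin K × Sym2 V → Bool),
        trialHeads es J'' (q+1) σ = trialHeads es J'' q σ +
          (if trial (coinOf σ) es q J'' ∧ coinOf σ (es q) J'' = true then 1 else 0) := by
      intro σ
      rw [trialHeads, trialHeads, Finset.range_add_one, Finset.filter_insert]
      split
      · rw [Finset.card_insert_of_notMem (by simp)]
      · rw [add_zero]
    set G : (Fin L × Fin K × Sym2 V → Bool) → Bool → ℝ := fun σ b =>
      x ^ trialTails es J'' q σ * y ^ trialHeads es J'' q σ *
        (if trial (coinOf σ) es q J'' then (if b then y else x) else 1) with hG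
    have hpoint : ∀ σ : Fin L × Fin K × Sym2 V → Bool,
        x ^ trialTails es J'' (q+1) σ * y ^ trialHeads es J'' (q+1) σ = G σ (σ a) := by
      intro σ
      rw [hsuccT σ, hsuccH σ, hG, hcoineq σ]
      by_cases htr : trial (coinOf σ) es q J''
      · by_cases hb : σ a = true
        · rw [hb]
          simp only [htr, true_and, if_true]
          norm_num [pow_add]
          ring
        · have hb' : σ a = false := by simpa using hb
          rw [hb']
          simp only [htr, true_and, if_true]
          norm_num [pow_add]
          ring
      · simp only [htr, false_and, if_false]
        norm_num
    have hGinv : ∀ (σ : Fin L × Fin K × Sym2 V → Bool) (b b' : Bool),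
        G (Function.update σ a b) b' = G σ b' := by
      intro σ b b'
      rw [hG]
      simp only
      rw [hTails σ b, hHeads σ b, htrial σ b q le_rfl]
    have hpa : pCoins (V := V) (L := L) (K := K) a = p := rfl
    have hxy : p * y + (1 - p) * x = 1 := by
      rw [hx, hy]; ring
    calc Exp pCoins (fun σ => x ^ trialTails es J'' (q+1) σ * y ^ trialHeads es J'' (q+1) σ)
        = Exp pCoins (fun σ => G σ (σ a)) := congrArg _ (funext hpoint)
      _ = Exp pCoins (fun σ => pCoins a * G σ true + (1 - pCoins a) * G σ false) :=
          exp_update pCoins a G hGinv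
      _ = Exp pCoins
          (fun σ => x ^ trialTails es J'' q σ * y ^ trialHeads es J'' q σ) := by
          refine congrArg _ (funext fun σ => ?_)
          rw [hpa, hG]
          simp only
          by_cases htr : trial (coinOf σ) es q J''
          · rw [if_pos htr, if_pos htr]
            show p * (x ^ trialTails es J'' q σ * y ^ trialHeads es J'' q σ * y)
                + (1 - p) * (x ^ trialTails es J'' q σ * y ^ trialHeads es J'' q σ * x)
                = x ^ trialTails es J'' q σ * y ^ trialHeads es J'' q σ
            linear_combination (x ^ trialTails es J'' q σ * y ^ trialHeads es J'' q σ) * hxy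
          · rw [if_neg htr, if_neg htr]
            ring
      _ = 1 := ihq

open Classical in
lemma pr_tail (es : ℕ → Sym2 V) (m : ℕ)
    (hinj : ∀ t < m, ∀ t' < m, es t = es t' → t = t')
    (lf : Fin L) (kf : Fin K) (c' : ℕ) :
    Pr (pCoins (V := V) (L := L) (K := K))
      {σ | c' * 2^((lf:ℕ)+1) * Fintype.card V
        < trialTails es (K*(lf:ℕ)+(kf:ℕ)+1) m σ} ≤
      (2/3:ℝ)^(c' * Fintype.card V) * 2^(Fintype.card V) := by
  set p : ℝ := (1/2:ℝ)^((lf:ℕ)+1) with hp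
  set x : ℝ := 1 + p/2 with hx
  set y : ℝ := (1+p)/2 with hy
  set J'' : ℕ := K*(lf:ℕ)+(kf:ℕ)+1 with hJ''
  set n : ℕ := Fintype.card V with hn
  set N : ℕ := c' * 2^((lf:ℕ)+1) * n with hN
  have hp0 : 0 < p := by rw [hp]; positivity
  have hp1 : p ≤ 1 := by
    rw [hp]
    calc ((1:ℝ)/2)^((lf:ℕ)+1) ≤ 1^((lf:ℕ)+1) := by
          refine pow_le_pow_left₀ (by norm_num) (by norm_num) _
      _ = 1 := one_pow _
  have hx1 : (1:ℝ) ≤ x := by rw [hx]; linarith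
  have hy0 : (0:ℝ) < y := by rw [hy]; linarith
  have hy1 : y ≤ 1 := by rw [hy]; linarith
  have hyhalf : (1/2:ℝ) ≤ y := by rw [hy]; linarith
  have hpc : ∀ a : Fin L × Fin K × Sym2 V, 0 ≤ pCoins (V := V) a ∧ pCoins (V := V) a ≤ 1 := by
    intro a
    constructor
    · show (0:ℝ) ≤ (1/2:ℝ)^((a.1:ℕ)+1)
      positivity
    · show ((1:ℝ)/2)^((a.1:ℕ)+1) ≤ 1
      calc ((1:ℝ)/2)^((a.1:ℕ)+1) ≤ 1^((a.1:ℕ)+1) :=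
            pow_le_pow_left₀ (by norm_num) (by norm_num) _
        _ = 1 := one_pow _
  -- the key pointwise bound on `x^(2^(l''))`
  have hxpow : (3/2:ℝ) ≤ x ^ (2^((lf:ℕ)+1)) := by
    have hber := one_add_mul_le_pow (a := p/2) (by linarith) (2^((lf:ℕ)+1))
    have hval : (2^((lf:ℕ)+1) : ℕ) * (p/2) = 1/2 := by
      push_cast
      rw [hp, ← mul_div_assoc, ← mul_pow]
      norm_num
    calc (3/2:ℝ) = 1 + (2^((lf:ℕ)+1) : ℕ) * (p/2) := by rw [hval]; norm_num
      _ ≤ (1 + p/2) ^ (2^((lf:ℕ)+1)) := hber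
      _ = x ^ (2^((lf:ℕ)+1)) := by rw [hx]
  have hxN : ((3:ℝ)/2)^(c' * n) ≤ x ^ N := by
    have h1 : x ^ N = (x ^ (2^((lf:ℕ)+1))) ^ (c' * n) := by
      rw [← pow_mul]
      congr 1
      rw [hN]
      ring
    rw [h1]
    exact pow_le_pow_left₀ (by norm_num) hxpow _
  have hyn : ((1:ℝ)/2)^n ≤ y ^ n := pow_le_pow_left₀ (by norm_num) hyhalf _
  have hposD : (0:ℝ) < x ^ (N+1) * y ^ n := by positivity
  have hq0 : ∀ σ : Fin L × Fin K × Sym2 V → Bool,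
      0 ≤ x ^ trialTails es J'' m σ * y ^ trialHeads es J'' m σ * (x^(N+1) * y^n)⁻¹ := by
    intro σ
    have h1 : (0:ℝ) < x := by linarith
    positivity
  have hq1 : ∀ σ ∈ {σ : Fin L × Fin K × Sym2 V → Bool | N < trialTails es J'' m σ},
      1 ≤ x ^ trialTails es J'' m σ * y ^ trialHeads es J'' m σ * (x^(N+1) * y^n)⁻¹ := by
    intro σ hσ
    have hW : N + 1 ≤ trialTails es J'' m σ := hσ
    have hH : trialHeads es J'' m σ ≤ n := by
      rw [hn, ← Nat.card_eq_fintype_card]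
      exact trialHeads_le es (by omega) m σ
    have h1 : x ^ (N+1) ≤ x ^ trialTails es J'' m σ := pow_le_pow_right₀ hx1 hW
    have h2 : y ^ n ≤ y ^ trialHeads es J'' m σ :=
      pow_le_pow_of_le_one (le_of_lt hy0) hy1 hH
    have h3 : x ^ (N+1) * y ^ n ≤ x ^ trialTails es J'' m σ * y ^ trialHeads es J'' m σ :=
      mul_le_mul h1 h2 (by positivity) (by positivity)
    rw [← div_eq_mul_inv, le_div_iff₀ hposD, one_mul]
    exact h3
  have hExp : Exp (pCoins (V := V) (L := L) (K := K))
      (fun σ => x ^ trialTails es J'' m σ * y ^ trialHeads es J'' m σ * (x^(N+1) * y^n)⁻¹)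
      = (x^(N+1) * y^n)⁻¹ := by
    have h1 : (fun σ : Fin L × Fin K × Sym2 V → Bool =>
        x ^ trialTails es J'' m σ * y ^ trialHeads es J'' m σ * (x^(N+1) * y^n)⁻¹)
        = fun σ => (x^(N+1) * y^n)⁻¹ *
          (x ^ trialTails es J'' m σ * y ^ trialHeads es J'' m σ) := by
      funext σ; ring
    rw [h1, Exp_smul, exp_trial es m hinj lf kf m le_rfl, mul_one]
  have hPr := Pr_le_exp (pCoins (V := V) (L := L) (K := K)) hpc hq0 hq1
  rw [hExp] at hPr
  refine le_trans hPr ?_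
  have hb1 : ((3:ℝ)/2)^(c'*n) * (1/2)^n ≤ x^(N+1) * y^n := by
    have hxN1 : ((3:ℝ)/2)^(c'*n) ≤ x^(N+1) := by
      refine le_trans hxN (pow_le_pow_right₀ hx1 (Nat.le_succ N))
    exact mul_le_mul hxN1 hyn (by positivity) (by positivity)
  have hb2 : (0:ℝ) < ((3:ℝ)/2)^(c'*n) * (1/2)^n := by positivity
  calc (x^(N+1) * y^n)⁻¹ ≤ (((3:ℝ)/2)^(c'*n) * (1/2)^n)⁻¹ := by
        exact inv_anti₀ hb2 hb1
    _ = (2/3:ℝ)^(c'*n) * 2^n := by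
        rw [mul_inv, ← inv_pow, ← inv_pow]
        norm_num

end Crux

/-! ### Arithmetic helpers -/

lemma sum_two_pow_le : ∀ l : ℕ, (∑ i ∈ Finset.range l, 2^(i+1)) ≤ 2^(l+1)
  | 0 => by simp
  | l + 1 => by
    rw [Finset.sum_range_succ]
    have := sum_two_pow_le l
    have h2 : (2:ℕ)^(l+1+1) = 2^(l+1) + 2^(l+1) := by ring
    omega

lemma le_two_pow_pred : ∀ n : ℕ, n ≤ 2^(n-1)
  | 0 => by simp
  | n + 1 => by
    simpa using Nat.lt_two_pow_self (n := n)

lemma nat_main_ineq (D n : ℕ) (hn : 1 ≤ n) : (n+1)*n*n^D ≤ 2^((D+3)*n) := by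
  have h1 : n ≤ 2^(n-1) := le_two_pow_pred n
  have h2 : n + 1 ≤ 2^n := Nat.lt_two_pow_self (n := n)
  have h3 : n ≤ 2^n := le_of_lt (Nat.lt_two_pow_self (n := n))
  have h4 : n^D ≤ (2^(n-1))^D := Nat.pow_le_pow_left h1 D
  have h5 : (n+1)*n*n^D ≤ 2^n * 2^n * (2^(n-1))^D := by
    exact Nat.mul_le_mul (Nat.mul_le_mul h2 h3) h4
  refine le_trans h5 ?_
  rw [← pow_mul, ← pow_add, ← pow_add]
  refine Nat.pow_le_pow_right (by norm_num) ?_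
  have : (n-1)*D ≤ n*D := Nat.mul_le_mul_right D (Nat.sub_le n 1)
  calc n + n + (n-1)*D ≤ n + n + n*D := by omega
    _ ≤ (D+3)*n := by ring_nf; omega

/-! ### Main theorem -/

/-- In the one-pass refinement sampling process (Algorithm 3), for every index
`1 ≤ J ≤ LK` with `J = (l, k)` (i.e. `J = K(l-1) + k`), let `X^J` denote the set of edges
`e_t = (u_t, v_t)` such that `u_t` and `v_t` lie in the same part of `D_{J-1}` at the moment
`e_t` arrives. Then there is a constant `c` (depending on `d`) such that with probability at
least `1 - n^{-d}`, `|E ∖ X^J| ≤ c K 2^l n`. -/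
theorem one_pass_weak_edges_bound (d : ℝ) (hd : 0 < d) :
    ∃ c : ℝ, 0 < c ∧
      ∀ (V : Type) [Fintype V] [DecidableEq V] (es : ℕ → Sym2 V) (m K : ℕ),
        (∀ t < m, ¬ (es t).IsDiag) →
        (∀ t < m, ∀ t' < m, es t = es t' → t = t') →
        (Fintype.card V : ℝ) < (4 / 3 : ℝ) ^ K →
        let n : ℕ := Fintype.card V
        let L : ℕ := Nat.clog 2 (2 * n)
        ∀ J l k : ℕ, 1 ≤ l → l ≤ L → 1 ≤ k → k ≤ K → J = K * (l - 1) + k →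
          1 - (n : ℝ) ^ (-d) ≤
            Pr (pCoins (V := V) (L := L) (K := K))
              {σ | (({t | t < m ∧ ¬ connectedAtArrival (coinOf σ) es t (J - 1)}.ncard : ℝ)) ≤
                c * K * 2 ^ l * n} := by
  classical
  set D : ℕ := ⌈d⌉₊ with hD
  set c' : ℕ := 3 * (D + 4) with hc'
  have hc'pos : 0 < c' := by omega
  refine ⟨((2 * c' : ℕ) : ℝ), by exact_mod_cast Nat.pos_of_ne_zero (by omega), ?_⟩
  intro V _ _ es m K hdiag hinj hVK n L J l k hl1 hlL hk1 hkK hJ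
  have hK0 : 0 < K := lt_of_lt_of_le hk1 hkK
  have hn1 : 1 ≤ n := by
    by_contra h
    have hn0 : n = 0 := by omega
    have : L = 0 := by
      show Nat.clog 2 (2 * n) = 0
      rw [hn0]
      simp
    omega
  have hL1 : 1 ≤ L := le_trans hl1 hlL
  have hJ1 : 1 ≤ J := by omega
  have hJKl : J ≤ K * l := by
    have h1 : l - 1 + 1 = l := by omega
    calc J = K * (l - 1) + k := hJ
      _ ≤ K * (l - 1) + K := by omega
      _ = K * (l - 1 + 1) := by ring
      _ = K * l := by rw [h1]
  have hJKL : J ≤ K * L := le_trans hJKl (Nat.mul_le_mul_left K hlL)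
  -- probability basics
  have hpc : ∀ a : Fin L × Fin K × Sym2 V,
      0 ≤ pCoins (V := V) a ∧ pCoins (V := V) a ≤ 1 := by
    intro a
    constructor
    · show (0:ℝ) ≤ (1/2:ℝ)^((a.1:ℕ)+1)
      positivity
    · show ((1:ℝ)/2)^((a.1:ℕ)+1) ≤ 1
      calc ((1:ℝ)/2)^((a.1:ℕ)+1) ≤ 1^((a.1:ℕ)+1) :=
            pow_le_pow_left₀ (by norm_num) (by norm_num) _
        _ = 1 := one_pow _
  -- the bad-edge finset
  set badP : (Fin L × Fin K × Sym2 V → Bool) → Finset ℕ := fun σ =>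
    (Finset.range m).filter (fun t => ¬ connectedAtArrival (coinOf σ) es t (J-1))
    with hbadP
  have hset : ∀ σ : Fin L × Fin K × Sym2 V → Bool,
      ({t | t < m ∧ ¬ connectedAtArrival (coinOf σ) es t (J - 1)}.ncard : ℝ)
        = ((badP σ).card : ℝ) := by
    intro σ
    congr 1
    rw [← Set.ncard_coe_finset (badP σ)]
    congr 1
    ext t
    simp [hbadP]
  -- the index set of relevant (level, round) pairs
  set S : Finset (Fin L × Fin K) := Finset.univ.filter
    (fun z => K * (z.1:ℕ) + (z.2:ℕ) + 1 ≤ J - 1) with hS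
  set A : Finset (Fin L) := Finset.univ.filter (fun lf => (lf:ℕ) < l) with hA
  have hSsub : S ⊆ A ×ˢ Finset.univ := by
    intro z hz
    rw [hS, Finset.mem_filter] at hz
    rw [Finset.mem_product]
    refine ⟨?_, Finset.mem_univ _⟩
    rw [hA, Finset.mem_filter]
    refine ⟨Finset.mem_univ _, ?_⟩
    have h1 : K * (z.1:ℕ) < J := by omega
    have h2 : K * (z.1:ℕ) < K * l := lt_of_lt_of_le h1 hJKl
    exact lt_of_mul_lt_mul_left h2 (Nat.zero_le K)
  have hcardA : A.card ≤ l := by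
    have h1 : A.card = (A.image (Fin.val)).card :=
      (Finset.card_image_of_injective A Fin.val_injective).symm
    have h2 : A.image (Fin.val) ⊆ Finset.range l := by
      intro i hi
      rw [Finset.mem_image] at hi
      obtain ⟨lf, hlf, rfl⟩ := hi
      rw [hA, Finset.mem_filter] at hlf
      exact Finset.mem_range.mpr hlf.2
    rw [h1]
    calc (A.image Fin.val).card ≤ (Finset.range l).card := Finset.card_le_card h2
      _ = l := Finset.card_range l
  have hcardS : S.card ≤ l * K := by
    calc S.card ≤ (A ×ˢ Finset.univ).card := Finset.card_le_card hSsub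
      _ = A.card * K := by rw [Finset.card_product, Finset.card_univ, Fintype.card_fin]
      _ ≤ l * K := Nat.mul_le_mul_right K hcardA
  -- per-σ count bound
  have hcount : ∀ σ : Fin L × Fin K × Sym2 V → Bool,
      (badP σ).card ≤ ∑ z ∈ S, trialTails es (K * (z.1:ℕ) + (z.2:ℕ) + 1) m σ := by
    intro σ
    have hsub : badP σ ⊆ S.biUnion (fun z => (Finset.range m).filter
        (fun t => trial (coinOf σ) es t (K * (z.1:ℕ) + (z.2:ℕ) + 1)
          ∧ coinOf σ (es t) (K * (z.1:ℕ) + (z.2:ℕ) + 1) = false)) := by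
      intro t ht
      rw [hbadP, Finset.mem_filter, Finset.mem_range] at ht
      obtain ⟨htm, hbad⟩ := ht
      obtain ⟨i, hi1, hi2, htr, hco⟩ := exists_trial_of_not_connected (J - 1) hbad
      have hKLc : K * L = L * K := Nat.mul_comm K L
      have hiJ : i - 1 < K * L := by omega
      have hdl : (i - 1) / K < L := by
        rw [Nat.div_lt_iff_lt_mul hK0]
        omega
      have hmk : (i - 1) % K < K := Nat.mod_lt _ hK0
      set z : Fin L × Fin K := (⟨(i-1)/K, hdl⟩, ⟨(i-1)%K, hmk⟩) with hz
      have hzi : K * ((z.1:ℕ)) + (z.2:ℕ) + 1 = i := by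
        have := Nat.div_add_mod (i - 1) K
        show K * ((i-1)/K) + (i-1) % K + 1 = i
        omega
      rw [Finset.mem_biUnion]
      refine ⟨z, ?_, ?_⟩
      · rw [hS, Finset.mem_filter]
        exact ⟨Finset.mem_univ _, by rw [hzi]; omega⟩
      · rw [Finset.mem_filter, Finset.mem_range, hzi]
        exact ⟨htm, htr, hco⟩
    calc (badP σ).card
        ≤ (S.biUnion (fun z => (Finset.range m).filter
            (fun t => trial (coinOf σ) es t (K * (z.1:ℕ) + (z.2:ℕ) + 1)
              ∧ coinOf σ (es t) (K * (z.1:ℕ) + (z.2:ℕ) + 1) = false))).card :=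
          Finset.card_le_card hsub
      _ ≤ ∑ z ∈ S, ((Finset.range m).filter
            (fun t => trial (coinOf σ) es t (K * (z.1:ℕ) + (z.2:ℕ) + 1)
              ∧ coinOf σ (es t) (K * (z.1:ℕ) + (z.2:ℕ) + 1) = false)).card :=
          Finset.card_biUnion_le
      _ = ∑ z ∈ S, trialTails es (K * (z.1:ℕ) + (z.2:ℕ) + 1) m σ := by
          refine Finset.sum_congr rfl fun z _ => ?_
          rw [trialTails]
  -- the threshold sum
  have hthresh : ∑ z ∈ S, c' * 2^((z.1:ℕ)+1) * n ≤ 2 * c' * K * 2^l * n := by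
    calc ∑ z ∈ S, c' * 2^((z.1:ℕ)+1) * n
        ≤ ∑ z ∈ A ×ˢ Finset.univ, c' * 2^((z.1:ℕ)+1) * n :=
          Finset.sum_le_sum_of_subset hSsub
      _ = ∑ lf ∈ A, K * (c' * 2^((lf:ℕ)+1) * n) := by
          rw [Finset.sum_product]
          refine Finset.sum_congr rfl fun lf _ => ?_
          simp [mul_comm]
      _ = K * c' * n * ∑ lf ∈ A, 2^((lf:ℕ)+1) := by
          rw [Finset.mul_sum]
          refine Finset.sum_congr rfl fun lf _ => by ring
      _ ≤ K * c' * n * 2^(l+1) := by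
          refine Nat.mul_le_mul_left _ ?_
          calc ∑ lf ∈ A, 2^((lf:ℕ)+1)
              = ∑ i ∈ A.image Fin.val, 2^(i+1) := by
                rw [Finset.sum_image (fun a _ b _ h => Fin.val_injective h)]
            _ ≤ ∑ i ∈ Finset.range l, 2^(i+1) := by
                refine Finset.sum_le_sum_of_subset ?_
                intro i hi
                rw [Finset.mem_image] at hi
                obtain ⟨lf, hlf, rfl⟩ := hi
                rw [hA, Finset.mem_filter] at hlf
                exact Finset.mem_range.mpr hlf.2
            _ ≤ 2^(l+1) := sum_two_pow_le l
      _ = 2 * c' * K * 2^l * n := by ring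
  -- inclusion of the complement of the good event into the union of tail events
  set Gset : Set (Fin L × Fin K × Sym2 V → Bool) :=
    {σ | (({t | t < m ∧ ¬ connectedAtArrival (coinOf σ) es t (J - 1)}.ncard : ℝ)) ≤
      ((2 * c' : ℕ) : ℝ) * K * 2 ^ l * n} with hGset
  have hGc : ∀ σ ∈ Gsetᶜ,
      ∃ z ∈ S, σ ∈ {σ : Fin L × Fin K × Sym2 V → Bool |
        c' * 2^((z.1:ℕ)+1) * Fintype.card V
          < trialTails es (K * (z.1:ℕ) + (z.2:ℕ) + 1) m σ} := by
    intro σ hσ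
    rw [Set.mem_compl_iff, hGset, Set.mem_setOf_eq, hset σ] at hσ
    by_contra h
    push_neg at h
    have hall : ∀ z ∈ S, trialTails es (K * (z.1:ℕ) + (z.2:ℕ) + 1) m σ
        ≤ c' * 2^((z.1:ℕ)+1) * n := by
      intro z hz
      have := h z hz
      rw [Set.mem_setOf_eq, not_lt] at this
      exact this
    have hle : (badP σ).card ≤ 2 * c' * K * 2^l * n := by
      calc (badP σ).card ≤ ∑ z ∈ S, trialTails es (K * (z.1:ℕ) + (z.2:ℕ) + 1) m σ :=
            hcount σ
        _ ≤ ∑ z ∈ S, c' * 2^((z.1:ℕ)+1) * n := Finset.sum_le_sum hall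
        _ ≤ 2 * c' * K * 2^l * n := hthresh
    refine hσ ?_
    have : ((badP σ).card : ℝ) ≤ ((2 * c' * K * 2^l * n : ℕ) : ℝ) := by
      exact_mod_cast hle
    refine le_trans this ?_
    push_cast
    ring_nf
    exact le_refl _
  -- split into the deterministic and probabilistic regimes
  by_cases hdet : (n:ℝ) ≤ 2 * ((2 * c' : ℕ) : ℝ) * K * 2^l
  · -- deterministic: there are at most n²/2 edges in total
    have huniv : Gset = Set.univ := by
      refine Set.eq_univ_of_forall fun σ => ?_
      rw [hGset, Set.mem_setOf_eq, hset σ]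
      have h1 : (badP σ).card ≤ m := by
        calc (badP σ).card ≤ (Finset.range m).card := Finset.card_filter_le _ _
          _ = m := Finset.card_range m
      have h2 : m ≤ n.choose 2 := by
        have hinjf : Function.Injective
            (fun t : Fin m => (⟨es t.val, hdiag t.val t.isLt⟩ :
              {e : Sym2 V // ¬ e.IsDiag})) := by
          intro t t' htt
          have : es t.val = es t'.val := congrArg Subtype.val htt
          exact Fin.ext (hinj t.val t.isLt t'.val t'.isLt this)
        calc m = Fintype.card (Fin m) := (Fintype.card_fin m).symm
          _ ≤ Fintype.card {e : Sym2 V // ¬ e.IsDiag} :=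
            Fintype.card_le_of_injective _ hinjf
          _ = n.choose 2 := Sym2.card_subtype_not_diag
      have h3 : (n.choose 2 : ℝ) ≤ (n:ℝ) * n / 2 := by
        rw [Nat.choose_two_right]
        calc ((n * (n-1) / 2 : ℕ) : ℝ) ≤ ((n * (n-1) : ℕ) : ℝ) / 2 := by
              exact_mod_cast Nat.cast_div_le
          _ ≤ (n:ℝ) * n / 2 := by
            have : ((n * (n-1) : ℕ) : ℝ) ≤ (n:ℝ) * n := by
              push_cast
              have : ((n-1:ℕ):ℝ) ≤ (n:ℝ) := by exact_mod_cast Nat.sub_le n 1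
              nlinarith [Nat.cast_nonneg (α := ℝ) n]
            linarith
      have h4 : (n:ℝ) * n / 2 ≤ ((2 * c' : ℕ) : ℝ) * K * 2^l * n := by
        have hn0 : (0:ℝ) ≤ n := Nat.cast_nonneg n
        nlinarith
      calc ((badP σ).card : ℝ) ≤ (m : ℝ) := by exact_mod_cast h1
        _ ≤ (n.choose 2 : ℝ) := by exact_mod_cast h2
        _ ≤ (n:ℝ) * n / 2 := h3
        _ ≤ ((2 * c' : ℕ) : ℝ) * K * 2^l * n := h4
    rw [huniv]
    have hPru : Pr (pCoins (V := V) (L := L) (K := K)) Set.univ = 1 := by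
      rw [Pr, Set.indicator_univ, sum_bernWeight]
    rw [hPru]
    have := Real.rpow_nonneg (Nat.cast_nonneg n) (-d)
    linarith
  · -- probabilistic regime
    push_neg at hdet
    have hcompl := Pr_add_compl (pCoins (V := V) (L := L) (K := K)) hpc Gset
    have hunion := Pr_le_sum (pCoins (V := V) (L := L) (K := K)) hpc hGc
    set T : ℝ := (2/3:ℝ)^(c' * Fintype.card V) * 2^(Fintype.card V) with hT
    have hT0 : 0 ≤ T := by rw [hT]; positivity
    have htail : ∀ z ∈ S, Pr (pCoins (V := V) (L := L) (K := K))
        {σ : Fin L × Fin K × Sym2 V → Bool |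
          c' * 2^((z.1:ℕ)+1) * Fintype.card V
            < trialTails es (K * (z.1:ℕ) + (z.2:ℕ) + 1) m σ} ≤ T :=
      fun z _ => pr_tail es m hinj z.1 z.2 c'
    have hsumT : ∑ z ∈ S, Pr (pCoins (V := V) (L := L) (K := K))
        {σ : Fin L × Fin K × Sym2 V → Bool |
          c' * 2^((z.1:ℕ)+1) * Fintype.card V
            < trialTails es (K * (z.1:ℕ) + (z.2:ℕ) + 1) m σ} ≤ S.card • T :=
      Finset.sum_le_card_nsmul S _ T htail
    -- size bounds
    have hKn : K ≤ n := by
      have h2l : (2:ℝ) ≤ 2^l := by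
        calc (2:ℝ) = 2^1 := (pow_one 2).symm
          _ ≤ 2^l := pow_le_pow_right₀ (by norm_num) hl1
      have hc2 : (2:ℝ) ≤ ((2 * c' : ℕ) : ℝ) := by
        have : (2:ℕ) ≤ 2 * c' := by omega
        exact_mod_cast this
      have hK0' : (0:ℝ) ≤ K := Nat.cast_nonneg K
      have hfac : (1:ℝ) ≤ 2 * ((2 * c' : ℕ) : ℝ) * 2^l := by nlinarith
      have hKreal : (K:ℝ) < n := by
        have h1 : (K:ℝ) * 1 ≤ (K:ℝ) * (2 * ((2 * c' : ℕ) : ℝ) * 2^l) :=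
          mul_le_mul_of_nonneg_left hfac hK0'
        calc (K:ℝ) = K * 1 := (mul_one _).symm
          _ ≤ 2 * ((2 * c' : ℕ) : ℝ) * K * 2^l := by
              refine le_trans h1 (le_of_eq ?_)
              ring
          _ < n := hdet
      exact_mod_cast le_of_lt hKreal
    have hLn : L ≤ n + 1 := by
      have h2 : 2 * n ≤ 2^(n+1) := by
        have := Nat.lt_two_pow_self (n := n)
        have h2p : 2^(n+1) = 2 * 2^n := by ring
        omega
      exact (Nat.clog_le_iff_le_pow one_lt_two).mpr h2
    have hlKn : l * K ≤ (n+1) * n := Nat.mul_le_mul (le_trans hlL hLn) hKn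
    -- numeric endgame
    have hn0R : (0:ℝ) < n := by exact_mod_cast hn1
    have e1 : (2/3:ℝ)^(c' * n) ≤ (1/2:ℝ)^((D+4)*n) := by
      have h1 : (2/3:ℝ)^(c' * n) = ((2/3:ℝ)^3)^((D+4)*n) := by
        rw [← pow_mul]
        congr 1
        rw [hc']
        ring
      rw [h1]
      refine pow_le_pow_left₀ (by positivity) (by norm_num) _
    have e2 : ((1:ℝ)/2)^((D+4)*n) * 2^n = (1/2:ℝ)^((D+3)*n) := by
      have h1 : (D+4)*n = (D+3)*n + n := by ring
      rw [h1, pow_add, mul_assoc, ← mul_pow]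
      norm_num
    have eT : T ≤ (1/2:ℝ)^((D+3)*n) := by
      rw [hT, ← e2]
      refine mul_le_mul_of_nonneg_right e1 (by positivity)
    have e3 : ((n+1) * n : ℝ) * (1/2:ℝ)^((D+3)*n) ≤ ((n:ℝ)^D)⁻¹ := by
      have hnat := nat_main_ineq D n hn1
      have hnatR : ((n:ℝ)+1) * n * (n:ℝ)^D ≤ 2^((D+3)*n) := by
        exact_mod_cast hnat
      have hpow2 : (0:ℝ) < 2^((D+3)*n) := by positivity
      have hnD : (0:ℝ) < (n:ℝ)^D := by positivity
      rw [show ((1:ℝ)/2)^((D+3)*n) = (2^((D+3)*n))⁻¹ by rw [one_div, inv_pow]]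
      rw [← div_eq_mul_inv, div_le_iff₀ hpow2, inv_mul_eq_div, le_div_iff₀ hnD]
      exact hnatR
    have e4 : ((n:ℝ)^D)⁻¹ ≤ (n:ℝ)^(-d) := by
      rw [Real.rpow_neg (Nat.cast_nonneg n)]
      refine inv_anti₀ (Real.rpow_pos_of_pos hn0R d) ?_
      rw [← Real.rpow_natCast (n:ℝ) D]
      refine Real.rpow_le_rpow_of_exponent_le (by exact_mod_cast hn1) ?_
      rw [hD]
      exact Nat.le_ceil d
    have hPrGc : Pr (pCoins (V := V) (L := L) (K := K)) Gsetᶜ ≤ (n:ℝ)^(-d) := by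
      calc Pr (pCoins (V := V) (L := L) (K := K)) Gsetᶜ
          ≤ ∑ z ∈ S, Pr (pCoins (V := V) (L := L) (K := K))
            {σ : Fin L × Fin K × Sym2 V → Bool |
              c' * 2^((z.1:ℕ)+1) * Fintype.card V
                < trialTails es (K * (z.1:ℕ) + (z.2:ℕ) + 1) m σ} := hunion
        _ ≤ S.card • T := hsumT
        _ = (S.card : ℝ) * T := nsmul_eq_mul _ _
        _ ≤ ((n+1) * n : ℝ) * T := by
            refine mul_le_mul_of_nonneg_right ?_ hT0
            have : S.card ≤ (n+1) * n := le_trans hcardS hlKn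
            exact_mod_cast this
        _ ≤ ((n+1) * n : ℝ) * (1/2:ℝ)^((D+3)*n) := by
            refine mul_le_mul_of_nonneg_left eT (by positivity)
        _ ≤ ((n:ℝ)^D)⁻¹ := e3
        _ ≤ (n:ℝ)^(-d) := e4
    linarith

end GraphSparsification
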